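/- On ℝⁿ with f(y) = ‖y‖²/4, for any constant c > 0, the function v(t,y) := (c + e^{−t})^{−n/2} exp(‖y‖²/(4(c eᵗ + 1))) solves the drift heat equation ∂v/∂t = Δv − (1/2) y·∇v. -/

import Mathlib

noncomputable def pderiv6 {n : ℕ} (v : EuclideanSpace ℝ (Fin n) → ℝ) (i : Fin n)
    (y : EuclideanSpace ℝ (Fin n)) : ℝ :=
  fderiv ℝ v y (EuclideanSpace.single i 1)

noncomputable def lap6 {n : ℕ} (v : EuclideanSpace ℝ (Fin n) → ℝ)
    (y : EuclideanSpace ℝ (Fin n)) : ℝ :=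
  ∑ i, pderiv6 (pderiv6 v i) i y

variable {n : ℕ}

local notation "E" => EuclideanSpace ℝ (Fin n)

lemma hFexp (a b : ℝ) (y : E) :
    HasFDerivAt (fun z : E => a * Real.exp (b * ‖z‖ ^ 2))
      ((a * Real.exp (b * ‖y‖ ^ 2) * b) • (2 • innerSL ℝ y)) y := by
  have h0 : HasFDerivAt (fun z : E => ‖z‖ ^ 2) (2 • innerSL ℝ y) y :=
    (hasStrictFDerivAt_norm_sq y).hasFDerivAt
  have h1 := h0.const_mul b
  have h2 := (Real.hasDerivAt_exp (b * ‖y‖ ^ 2)).comp_hasFDerivAt y h1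
  have h3 := h2.const_mul a
  refine h3.congr_fderiv ?_
  ext z
  simp
  ring

lemma pd1 (a b : ℝ) (i : Fin n) (y : E) :
    pderiv6 (fun z : E => a * Real.exp (b * ‖z‖ ^ 2)) i y
      = a * Real.exp (b * ‖y‖ ^ 2) * (2 * b * y i) := by
  rw [pderiv6, (hFexp a b y).fderiv]
  simp [real_inner_comm, EuclideanSpace.inner_single_left, EuclideanSpace.inner_single_right]
  ring

lemma pd2 (a b : ℝ) (i : Fin n) (y : E) :
    pderiv6 (pderiv6 (fun z : E => a * Real.exp (b * ‖z‖ ^ 2)) i) i y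
      = a * Real.exp (b * ‖y‖ ^ 2) * (2 * b + 4 * b ^ 2 * (y i) ^ 2) := by
  have hfun : pderiv6 (fun z : E => a * Real.exp (b * ‖z‖ ^ 2)) i
      = fun z : E => (a * Real.exp (b * ‖z‖ ^ 2)) * ((2 * b) * z i) := by
    funext z; rw [pd1]
  rw [hfun, pderiv6]
  have hproj : HasFDerivAt (fun z : E => (2 * b) * z i)
      ((2 * b) • (EuclideanSpace.proj i : E →L[ℝ] ℝ)) y :=
    ((EuclideanSpace.proj (𝕜 := ℝ) i).hasFDerivAt).const_mul (2 * b)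
  have h := (hFexp a b y).mul hproj
  rw [HasFDerivAt.fderiv (f := fun z : E => a * Real.exp (b * ‖z‖ ^ 2) * (2 * b * z i)) h]
  simp [real_inner_comm, EuclideanSpace.inner_single_left, EuclideanSpace.single_apply,
    EuclideanSpace.inner_single_right]
  ring

lemma norm_sq_sum (y : E) : ∑ i, (y i) ^ 2 = ‖y‖ ^ 2 := by
  rw [EuclideanSpace.norm_eq, Real.sq_sqrt (by positivity)]
  simp [sq_abs]

lemma lap6_eq (a b : ℝ) (y : E) :
    lap6 (fun z : E => a * Real.exp (b * ‖z‖ ^ 2)) y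
      = a * Real.exp (b * ‖y‖ ^ 2) * (2 * b * n + 4 * b ^ 2 * ‖y‖ ^ 2) := by
  rw [lap6]
  simp_rw [pd2, ← Finset.mul_sum, Finset.sum_add_distrib, Finset.sum_const, ← Finset.mul_sum,
    norm_sq_sum, Finset.card_univ, Fintype.card_fin]
  ring

lemma drift_eq (a b : ℝ) (y : E) :
    ∑ i, y i * pderiv6 (fun z : E => a * Real.exp (b * ‖z‖ ^ 2)) i y
      = a * Real.exp (b * ‖y‖ ^ 2) * (2 * b * ‖y‖ ^ 2) := by
  simp_rw [pd1]
  have : ∀ i : Fin n, y i * (a * Real.exp (b * ‖y‖ ^ 2) * (2 * b * y i))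
      = (a * Real.exp (b * ‖y‖ ^ 2) * (2 * b)) * (y i) ^ 2 := fun i => by ring
  simp_rw [this, ← Finset.mul_sum, norm_sq_sum]
  ring

/-- The superexponential function `v(t,y) = (c+e^{-t})^{-n/2} exp(‖y‖²/(4(ce^t+1)))`
solves the drift heat equation `∂v/∂t = Δv - (1/2) y·∇v` on `ℝⁿ`. -/
theorem stmt_6 (n : ℕ) (c : ℝ) (hc : 0 < c)
    (v : ℝ → EuclideanSpace ℝ (Fin n) → ℝ)
    (hv : v = fun t y => (c + Real.exp (-t)) ^ (-(n : ℝ) / 2)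
        * Real.exp (‖y‖ ^ 2 / (4 * (c * Real.exp t + 1)))) :
    ∀ (t : ℝ) (y : EuclideanSpace ℝ (Fin n)),
      deriv (fun s => v s y) t
        = lap6 (v t) y - (1 / 2) * ∑ i, y i * pderiv6 (v t) i y := by
  subst hv
  intro t y
  have hP : (0:ℝ) < c + Real.exp (-t) := by positivity
  have hQ : (0:ℝ) < c * Real.exp t + 1 := by positivity
  -- rewrite v t as a * exp (b * ‖z‖²)
  have hvt : (fun z : EuclideanSpace ℝ (Fin n) =>
        (c + Real.exp (-t)) ^ (-(n : ℝ) / 2)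
          * Real.exp (‖z‖ ^ 2 / (4 * (c * Real.exp t + 1))))
      = fun z : EuclideanSpace ℝ (Fin n) =>
        ((c + Real.exp (-t)) ^ (-(n : ℝ) / 2))
          * Real.exp ((4 * (c * Real.exp t + 1))⁻¹ * ‖z‖ ^ 2) := by
    funext z; rw [inv_mul_eq_div]
  -- time derivative
  have hA : HasDerivAt (fun s => c + Real.exp (-s)) (-Real.exp (-t)) t := by
    have h := (Real.hasDerivAt_exp (-t)).comp t (hasDerivAt_neg t)
    simpa using h.const_add c
  have hA2 := hA.rpow_const (p := -(n : ℝ) / 2) (Or.inl hP.ne')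
  have hden : HasDerivAt (fun s => 4 * (c * Real.exp s + 1)) (4 * (c * Real.exp t)) t := by
    simpa using (((Real.hasDerivAt_exp t).const_mul c).add_const 1).const_mul 4
  have hBd : HasDerivAt (fun s => ‖y‖ ^ 2 / (4 * (c * Real.exp s + 1)))
      ((0 * (4 * (c * Real.exp t + 1)) - ‖y‖ ^ 2 * (4 * (c * Real.exp t)))
        / (4 * (c * Real.exp t + 1)) ^ 2) t :=
    (hasDerivAt_const t (‖y‖ ^ 2)).div hden (by positivity)
  have hE : HasDerivAt (fun s => Real.exp (‖y‖ ^ 2 / (4 * (c * Real.exp s + 1))))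
      (Real.exp (‖y‖ ^ 2 / (4 * (c * Real.exp t + 1)))
        * ((0 * (4 * (c * Real.exp t + 1)) - ‖y‖ ^ 2 * (4 * (c * Real.exp t)))
          / (4 * (c * Real.exp t + 1)) ^ 2)) t := by
    exact (Real.hasDerivAt_exp _).comp t hBd
  have hprod := hA2.mul hE
  have hder : deriv (fun s =>
      (c + Real.exp (-s)) ^ (-(n : ℝ) / 2)
        * Real.exp (‖y‖ ^ 2 / (4 * (c * Real.exp s + 1)))) t
      = _ := hprod.deriv
  simp only []
  rw [hder, hvt, lap6_eq, drift_eq]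
  -- pure algebra
  rw [Real.rpow_sub_one hP.ne']
  rw [div_eq_inv_mul (a := ‖y‖ ^ 2)]
  simp only [Real.exp_neg]
  have he : Real.exp t ≠ 0 := Real.exp_ne_zero t
  have hP' : c + (Real.exp t)⁻¹ ≠ 0 := by rw [← Real.exp_neg]; exact hP.ne'
  have hQ' : c * Real.exp t + 1 ≠ 0 := hQ.ne'
  field_simp
  ring
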